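/- Let E be a real normed vector space that is strictly convex (StrictConvexSpace ℝ E), let 0 < r₁ < r and k > 0 be real numbers, and let x, y lie in the closed ball of radius r₁ centered at 0, with x ≠ y. Suppose a, b ∈ E satisfy ‖a‖ = r, ‖b‖ = r, a = y + s·(x − y) for some real s ≥ 1, and b = x + t·(y − x) for some real t ≥ 1 (so a and b are the intersection points of the line through x and y with the sphere of radius r, with x between y and a, and y between x and b). Then k·(r − r₁)·‖x − y‖/(r + r₁)² ≤ (k/2)·log((‖x − b‖·‖y − a‖)/(‖x − a‖·‖y − b‖)) ≤ k·r·‖x − y‖/(r − r₁)². -/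

import Mathlib

set_option maxHeartbeats 800000

open Metric

/-- Estimates comparing the Hilbert metric of the open ball of radius `r` in a strictly
convex Banach space with the norm metric, on the closed ball of radius `r₁ < r`. -/
theorem hilbert_metric_estimates {E : Type*} [NormedAddCommGroup E] [NormedSpace ℝ E]
    [StrictConvexSpace ℝ E]
    (r r₁ k : ℝ) (hr₁ : 0 < r₁) (hrr : r₁ < r) (hk : 0 < k)
    (x y : E) (hx : x ∈ closedBall (0 : E) r₁) (hy : y ∈ closedBall (0 : E) r₁)
    (hxy : x ≠ y)
    (a b : E) (ha : ‖a‖ = r) (hb : ‖b‖ = r)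
    (s t : ℝ) (hs : 1 ≤ s) (ht : 1 ≤ t)
    (has : a = y + s • (x - y)) (hbt : b = x + t • (y - x)) :
    k * (r - r₁) * ‖x - y‖ / (r + r₁) ^ 2 ≤
      (k / 2) * Real.log ((‖x - b‖ * ‖y - a‖) / (‖x - a‖ * ‖y - b‖)) ∧
    (k / 2) * Real.log ((‖x - b‖ * ‖y - a‖) / (‖x - a‖ * ‖y - b‖)) ≤
      k * r * ‖x - y‖ / (r - r₁) ^ 2 := by
  have hxn : ‖x‖ ≤ r₁ := by simpa using mem_closedBall_iff_norm.mp hx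
  have hyn : ‖y‖ ≤ r₁ := by simpa using mem_closedBall_iff_norm.mp hy
  set d := ‖x - y‖ with hd_def
  have hd : 0 < d := norm_pos_iff.mpr (sub_ne_zero.mpr hxy)
  have hs1 : 1 < s := by
    rcases lt_or_eq_of_le hs with h | h
    · exact h
    · exfalso
      have hax : a = x := by rw [has, ← h, one_smul]; abel
      rw [hax] at ha
      linarith
  have ht1 : 1 < t := by
    rcases lt_or_eq_of_le ht with h | h
    · exact h
    · exfalso
      have hby : b = y := by rw [hbt, ← h, one_smul]; abel
      rw [hby] at hb
      linarith
  have hs0 : 0 < s := by linarith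
  have ht0 : 0 < t := by linarith
  have hya : ‖y - a‖ = s * d := by
    rw [has, show y - (y + s • (x - y)) = (-s) • (x - y) by module, norm_smul,
      Real.norm_eq_abs, abs_neg, abs_of_pos hs0]
  have hxa : ‖x - a‖ = (s - 1) * d := by
    rw [has, show x - (y + s • (x - y)) = (1 - s) • (x - y) by module, norm_smul,
      Real.norm_eq_abs, abs_of_nonpos (by linarith)]
    ring_nf
    rw [hd_def]
  have hxb : ‖x - b‖ = t * d := by
    rw [hbt, show x - (x + t • (y - x)) = (-t) • (y - x) by module, norm_smul,
      Real.norm_eq_abs, abs_neg, abs_of_pos ht0, norm_sub_rev]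
  have hyb : ‖y - b‖ = (t - 1) * d := by
    rw [hbt, show y - (x + t • (y - x)) = (1 - t) • (y - x) by module, norm_smul,
      Real.norm_eq_abs, abs_of_nonpos (by linarith), norm_sub_rev]
    ring_nf
    rw [hd_def]
  -- triangle inequality bounds
  have hsd_ub : s * d ≤ r + r₁ := by
    have := norm_sub_le y a
    rw [hya] at this; linarith
  have hsd_lb : r - r₁ ≤ (s - 1) * d := by
    have h1 : ‖a‖ ≤ ‖a - x‖ + ‖x‖ := by
      simpa using norm_add_le (a - x) x
    rw [ha, norm_sub_rev, hxa] at h1; linarith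
  have htd_ub : t * d ≤ r + r₁ := by
    have := norm_sub_le x b
    rw [hxb] at this; linarith
  have htd_lb : r - r₁ ≤ (t - 1) * d := by
    have h1 : ‖b‖ ≤ ‖b - y‖ + ‖y‖ := by
      simpa using norm_add_le (b - y) y
    rw [hb, norm_sub_rev, hyb] at h1; linarith
  have hrr1 : 0 < r - r₁ := by linarith
  have hrr2 : 0 < r + r₁ := by linarith
  have hs1' : (0:ℝ) < s - 1 := by linarith
  have ht1' : (0:ℝ) < t - 1 := by linarith
  -- cross-ratio
  have hR : (‖x - b‖ * ‖y - a‖) / (‖x - a‖ * ‖y - b‖) = (s / (s - 1)) * (t / (t - 1)) := by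
    rw [hxb, hya, hxa, hyb]
    field_simp
  have hlog : Real.log ((‖x - b‖ * ‖y - a‖) / (‖x - a‖ * ‖y - b‖)) =
      Real.log (s / (s - 1)) + Real.log (t / (t - 1)) := by
    rw [hR, Real.log_mul (by positivity) (by positivity)]
  set L := Real.log (s / (s - 1)) with hL_def
  set M := Real.log (t / (t - 1)) with hM_def
  -- lower bounds on logs
  have hlog_lb : ∀ u : ℝ, 0 < u → 1 - 1 / u ≤ Real.log u := by
    intro u hu
    have h1 := Real.log_le_sub_one_of_pos (show (0:ℝ) < 1 / u by positivity)
    rw [Real.log_div one_ne_zero (ne_of_gt hu), Real.log_one] at h1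
    linarith
  have hL_lb : d / (r + r₁) ≤ L := by
    have h1 := hlog_lb (s / (s - 1)) (by positivity)
    have h2 : 1 - 1 / (s / (s - 1)) = 1 / s := by field_simp; ring
    have h3 : d / (r + r₁) ≤ 1 / s := by
      rw [div_le_div_iff₀ hrr2 hs0]; linarith [mul_comm d s, hsd_ub]
    rw [h2] at h1; linarith
  have hM_lb : d / (r + r₁) ≤ M := by
    have h1 := hlog_lb (t / (t - 1)) (by positivity)
    have h2 : 1 - 1 / (t / (t - 1)) = 1 / t := by field_simp; ring
    have h3 : d / (r + r₁) ≤ 1 / t := by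
      rw [div_le_div_iff₀ hrr2 ht0]; linarith [mul_comm d t, htd_ub]
    rw [h2] at h1; linarith
  -- upper bounds on logs
  have hL_ub : L ≤ d / (r - r₁) := by
    have h1 := Real.log_le_sub_one_of_pos (show (0:ℝ) < s / (s - 1) by positivity)
    have h2 : s / (s - 1) - 1 = 1 / (s - 1) := by field_simp; ring
    have h3 : 1 / (s - 1) ≤ d / (r - r₁) := by
      rw [div_le_div_iff₀ hs1' hrr1]; linarith [mul_comm d (s-1), hsd_lb]
    rw [h2] at h1; linarith
  have hM_ub : M ≤ d / (r - r₁) := by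
    have h1 := Real.log_le_sub_one_of_pos (show (0:ℝ) < t / (t - 1) by positivity)
    have h2 : t / (t - 1) - 1 = 1 / (t - 1) := by field_simp; ring
    have h3 : 1 / (t - 1) ≤ d / (r - r₁) := by
      rw [div_le_div_iff₀ ht1' hrr1]; linarith [mul_comm d (t-1), htd_lb]
    rw [h2] at h1; linarith
  rw [hlog]
  constructor
  · have h1 : k * (r - r₁) * d / (r + r₁) ^ 2 ≤ k * (d / (r + r₁)) := by
      rw [div_le_iff₀ (by positivity)]
      have : k * (d / (r + r₁)) * (r + r₁) ^ 2 = k * d * (r + r₁) := by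
        field_simp
      rw [this]; nlinarith [mul_pos (mul_pos hk hd) hr₁]
    have h2 : k * (d / (r + r₁)) ≤ k / 2 * (L + M) := by nlinarith
    linarith
  · have h1 : k / 2 * (L + M) ≤ k * (d / (r - r₁)) := by nlinarith
    have h2 : k * (d / (r - r₁)) ≤ k * r * d / (r - r₁) ^ 2 := by
      rw [show k * (d / (r - r₁)) = k * d / (r - r₁) from (mul_div_assoc k d _).symm,
        div_le_div_iff₀ (by positivity) (by positivity)]
      nlinarith [mul_pos (mul_pos (mul_pos hk hd) hrr1) hr₁]
    linarith
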